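/- For every k ≥ 1, every T ∈ Tab(2,k), every a ∈ ℂ∖{0} and every (l,b) ∈ {1,2}×(ℂ∖{0}), one has z_{l,b}(m^{(2)}_{T,a}) ≤ 2; that is, every monomial of the twisted q-character of the Kirillov–Reshetikhin module W^{(2)}_{k,a} of type D_4^{(3)} has affine degree at most 2. -/

import Mathlib

noncomputable section

/-- The set `B = {1,2,3,4,4̄,3̄,2̄,1̄}`. -/
inductive BB : Type
  | b1 | b2 | b3 | b4 | b4' | b3' | b2' | b1'
  deriving DecidableEq

instance : Fintype BB where
  elems := {.b1, .b2, .b3, .b4, .b4', .b3', .b2', .b1'}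
  complete := fun x => by cases x <;> simp

/-- The rank used to define the partial order on `B`
(`4` and `4̄` get the same rank, making them incomparable). -/
def BB.rank : BB → ℕ
  | .b1 => 0 | .b2 => 1 | .b3 => 2 | .b4 => 3 | .b4' => 3
  | .b3' => 4 | .b2' => 5 | .b1' => 6

/-- The partial order `⪯` on `B` : `1 ≺ 2 ≺ 3 ≺ 4 ≺ 3̄ ≺ 2̄ ≺ 1̄` and `3 ≺ 4̄ ≺ 3̄`,
with `4` and `4̄` incomparable. -/
def BB.le (x y : BB) : Prop := x = y ∨ x.rank < y.rank

/-- The strict order `≺` on `B`. -/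
def BB.lt (x y : BB) : Prop := x.rank < y.rank

/-- Monomials: the free abelian group on `{1,2} × ℂˣ`, written additively;
`Finsupp.single (i,b) 1` corresponds to the generator `Z_{i+1,b}`. -/
abbrev Mon2 : Type := (Fin 2 × ℂˣ) →₀ ℤ

/-- The group ring `ℤ[G]`. -/
abbrev LR2 : Type := AddMonoidAlgebra ℤ Mon2

/-- The generator `Z_{i,b}` (with `i : Fin 2` indexing `{1,2}`). -/
def Zv (i : Fin 2) (b : ℂˣ) : Mon2 := Finsupp.single (i, b) 1

/-- `j = e^{2iπ/3}`, a primitive cube root of unity, as a unit of `ℂ`. -/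
def jC : ℂˣ := Units.mk0 (Complex.exp (2 * Real.pi * Complex.I / 3)) (Complex.exp_ne_zero _)

/-- The boxes `⟦α⟧_a ∈ G` for `α ∈ B` (written additively). -/
def box (q : ℂˣ) : BB → ℂˣ → Mon2
  | .b1, a => Zv 0 a
  | .b2, a => -Zv 0 (a * q ^ 2) + Zv 1 (a ^ 3 * q ^ 3)
  | .b3, a => -Zv 1 (a ^ 3 * q ^ 9) + Zv 0 (a * q ^ 2 * jC) + Zv 0 (a * q ^ 2 * jC ^ 2)
  | .b4, a => Zv 0 (a * q ^ 2 * jC) - Zv 0 (a * q ^ 4 * jC ^ 2)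
  | .b4', a => Zv 0 (a * q ^ 2 * jC ^ 2) - Zv 0 (a * q ^ 4 * jC)
  | .b3', a => -Zv 0 (a * q ^ 4 * jC) - Zv 0 (a * q ^ 4 * jC ^ 2) + Zv 1 (a ^ 3 * q ^ 9)
  | .b2', a => Zv 0 (a * q ^ 4) - Zv 1 (a ^ 3 * q ^ 15)
  | .b1', a => -Zv 0 (a * q ^ 6)

/-- `Tab(1,k)`: sequences `(T_1,…,T_k)` in `B` with `T_p ⪯ T_{p+1}`. -/
def IsTab1 (k : ℕ) (T : Fin k → BB) : Prop :=
  ∀ (p : ℕ) (h : p + 1 < k), BB.le (T ⟨p, Nat.lt_of_succ_lt h⟩) (T ⟨p + 1, h⟩)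

/-- The monomial `m^{(1)}_{T,a} = ∏_{p=1}^{k} ⟦T_p⟧_{aq^{2(p-1)}}` (written additively). -/
def m1 (q : ℂˣ) {k : ℕ} (T : Fin k → BB) (a : ℂˣ) : Mon2 :=
  ∑ p : Fin k, box q (T p) (a * q ^ (2 * (p : ℕ)))

/-- `Tab(2,k)`: two-row arrays with entries in `B` satisfying (θ1)–(θ4).
Row `i : Fin 2` corresponds to row `i+1` of the paper. -/
def IsTab2 (k : ℕ) (T : Fin 2 → Fin k → BB) : Prop :=
  (∀ i : Fin 2, IsTab1 k (T i)) ∧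
  (∀ p : Fin k, ¬ BB.le (T 1 p) (T 0 p)) ∧
  (¬ ∃ p p' : Fin k, p < p' ∧
      (∀ r : Fin k, p ≤ r → r < p' → T 0 r = BB.b3) ∧ T 0 p' = BB.b4 ∧
      T 1 p = BB.b4 ∧ (∀ r : Fin k, p < r → r ≤ p' → T 1 r = BB.b3')) ∧
  (¬ ∃ p p' : Fin k, p < p' ∧
      (∀ r : Fin k, p ≤ r → r < p' → T 0 r = BB.b3) ∧ T 0 p' = BB.b4' ∧
      T 1 p = BB.b4' ∧ (∀ r : Fin k, p < r → r ≤ p' → T 1 r = BB.b3'))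

/-- The monomial `m^{(2)}_{T,a} = ∏_{i∈{1,2}} ∏_{p=1}^{k} ⟦T_{i,p}⟧_{aq^{2(p-i)}}`
(written additively; rows and columns are 0-indexed). -/
def m2 (q : ℂˣ) {k : ℕ} (T : Fin 2 → Fin k → BB) (a : ℂˣ) : Mon2 :=
  ∑ i : Fin 2, ∑ p : Fin k, box q (T i p) (a * q ^ (2 * ((p : ℤ) - (i : ℤ))))

/-! ### Auxiliary lemmas -/

lemma jC_prim : IsPrimitiveRoot (jC : ℂ) 3 := by
  have h := Complex.isPrimitiveRoot_exp 3 (by norm_num)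
  simpa [jC] using h

lemma jC_cube : jC ^ 3 = 1 := by ext; push_cast; exact jC_prim.pow_eq_one

lemma jC_ne_sq : jC ≠ jC ^ 2 := by
  intro h
  have h1 : (jC : ℂ) = (jC : ℂ) ^ 2 := by exact_mod_cast congrArg Units.val h
  have h2 : (jC : ℂ) * 1 = (jC : ℂ) * (jC : ℂ) := by ring_nf; linear_combination h1
  have h3 := mul_left_cancel₀ (a := (jC : ℂ)) (jC_prim.ne_zero (by norm_num)) h2
  exact jC_prim.ne_one (by norm_num) h3.symm

lemma q_zpow_eq_one {q : ℂˣ} (hq : ∀ n : ℕ, 0 < n → (q : ℂ) ^ n ≠ 1) {z : ℤ}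
    (h : q ^ z = 1) : z = 0 := by
  by_contra hz
  rcases lt_or_gt_of_ne hz with hlt | hgt
  · have h' : q ^ ((-z).toNat) = 1 := by
      rw [← zpow_natCast, Int.toNat_of_nonneg (by omega), zpow_neg, h, inv_one]
    exact hq (-z).toNat (by omega) (by rw [← Units.val_pow_eq_pow_val, h', Units.val_one])
  · have h' : q ^ (z.toNat) = 1 := by
      rw [← zpow_natCast, Int.toNat_of_nonneg (by omega)]; exact h
    exact hq z.toNat (by omega) (by rw [← Units.val_pow_eq_pow_val, h', Units.val_one])

lemma cancel_key {q : ℂˣ} (hq : ∀ n : ℕ, 0 < n → (q : ℂ) ^ n ≠ 1) {A B m m' : ℤ}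
    (h : q ^ A * jC ^ m = q ^ B * jC ^ m') : A = B := by
  have h3 : (q ^ A * jC ^ m) ^ (3 : ℕ) = (q ^ B * jC ^ m') ^ (3 : ℕ) := by rw [h]
  have hj : ∀ t : ℤ, (jC ^ t) ^ (3 : ℕ) = 1 := by
    intro t
    rw [← zpow_natCast (jC ^ t), ← zpow_mul, mul_comm, zpow_mul, zpow_natCast, jC_cube, one_zpow]
  rw [mul_pow, mul_pow, hj, hj, mul_one, mul_one, ← zpow_natCast (q ^ A), ← zpow_natCast (q ^ B),
    ← zpow_mul, ← zpow_mul] at h3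
  push_cast at h3
  have h4 : q ^ (A * 3 - B * 3) = 1 := by rw [zpow_sub, h3, mul_inv_cancel]
  have h5 := q_zpow_eq_one hq h4
  omega

lemma conflict {q : ℂˣ} (hq : ∀ n : ℕ, 0 < n → (q : ℂ) ^ n ≠ 1) (c : ℂˣ)
    (zp zp' : ℤ) (e e' m m' : ℕ)
    (h : c * q ^ zp * q ^ e * jC ^ m = c * q ^ zp' * q ^ e' * jC ^ m') :
    zp + e = zp' + e' := by
  apply cancel_key hq (m := (m : ℤ)) (m' := (m' : ℤ))
  have h2 : q ^ zp * (q ^ (e : ℤ) * jC ^ (m : ℤ)) = q ^ zp' * (q ^ (e' : ℤ) * jC ^ (m' : ℤ)) := by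
    rw [zpow_natCast, zpow_natCast, zpow_natCast, zpow_natCast]
    apply mul_left_cancel (a := c)
    rw [← mul_assoc, ← mul_assoc, ← mul_assoc, ← mul_assoc]
    exact h
  rw [zpow_add, mul_assoc, zpow_add, mul_assoc]
  exact h2

lemma conflict2 {q : ℂˣ} (hq : ∀ n : ℕ, 0 < n → (q : ℂ) ^ n ≠ 1) (c : ℂˣ)
    (zp zp' : ℤ) (e e' : ℕ)
    (h : (c * q ^ zp) ^ 3 * q ^ e = (c * q ^ zp') ^ 3 * q ^ e') :
    3 * zp + e = 3 * zp' + e' := by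
  have key : ∀ z : ℤ, (c * q ^ z) ^ 3 = c ^ 3 * q ^ (z * 3) := by
    intro z
    rw [mul_pow, ← zpow_natCast (q ^ z) 3, ← zpow_mul]
    norm_num
  have h' : c ^ 3 * q ^ (zp * 3) * q ^ e * jC ^ (0 : ℕ) =
      c ^ 3 * q ^ (zp' * 3) * q ^ e' * jC ^ (0 : ℕ) := by
    rw [pow_zero, mul_one, mul_one, ← key, ← key]; exact h
  have h2 := conflict hq (c ^ 3) (zp * 3) (zp' * 3) e e' 0 0 h'
  omega

/-- Which generator family (`Z_1` or `Z_2`) the positive entries of a box belong to. -/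
def lOf : BB → Fin 2
  | .b2 => 1 | .b3' => 1 | _ => 0

/-- The `q`-exponent offset of the positive entries of a box. -/
def eBB : BB → ℕ
  | .b1 => 0 | .b2 => 3 | .b3 => 2 | .b4 => 2 | .b4' => 2 | .b3' => 9 | .b2' => 4 | .b1' => 6

lemma eBB_mono : ∀ α α' : BB, lOf α = lOf α' → α.rank ≤ α'.rank → eBB α ≤ eBB α' := by decide

/-- Structure of a positive coefficient of a box. -/
lemma hit_structure (q : ℂˣ) (α : BB) (c : ℂˣ) (l : Fin 2) (b : ℂˣ)
    (h : 1 ≤ (box q α c) (l, b)) :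
    l = lOf α ∧
      ((l = 0 ∧ ∃ m : ℕ, b = c * q ^ eBB α * jC ^ m) ∨ (l = 1 ∧ b = c ^ 3 * q ^ eBB α)) := by
  cases α <;>
    simp only [box, Zv, Finsupp.add_apply, Finsupp.neg_apply, Finsupp.sub_apply,
      Finsupp.single_apply] at h
  case b1 =>
    by_cases hp : ((0 : Fin 2), c) = (l, b)
    · obtain ⟨hl, hb⟩ := Prod.mk.injEq .. ▸ hp
      subst hl
      exact ⟨rfl, Or.inl ⟨rfl, 0, by rw [← hb]; simp [eBB]⟩⟩
    · rw [if_neg hp] at h; exfalso; omega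
  case b2 =>
    by_cases hp : ((1 : Fin 2), c ^ 3 * q ^ 3) = (l, b)
    · obtain ⟨hl, hb⟩ := Prod.mk.injEq .. ▸ hp
      subst hl
      exact ⟨rfl, Or.inr ⟨rfl, by rw [← hb]; simp [eBB]⟩⟩
    · rw [if_neg hp] at h; exfalso; split_ifs at h <;> omega
  case b3 =>
    by_cases hp : ((0 : Fin 2), c * q ^ 2 * jC) = (l, b)
    · obtain ⟨hl, hb⟩ := Prod.mk.injEq .. ▸ hp
      subst hl
      exact ⟨rfl, Or.inl ⟨rfl, 1, by rw [← hb]; simp [eBB]⟩⟩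
    · by_cases hp2 : ((0 : Fin 2), c * q ^ 2 * jC ^ 2) = (l, b)
      · obtain ⟨hl, hb⟩ := Prod.mk.injEq .. ▸ hp2
        subst hl
        exact ⟨rfl, Or.inl ⟨rfl, 2, by rw [← hb]; simp [eBB]⟩⟩
      · rw [if_neg hp, if_neg hp2] at h; exfalso; split_ifs at h <;> omega
  case b4 =>
    by_cases hp : ((0 : Fin 2), c * q ^ 2 * jC) = (l, b)
    · obtain ⟨hl, hb⟩ := Prod.mk.injEq .. ▸ hp
      subst hl
      exact ⟨rfl, Or.inl ⟨rfl, 1, by rw [← hb]; simp [eBB]⟩⟩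
    · rw [if_neg hp] at h; exfalso; split_ifs at h <;> omega
  case b4' =>
    by_cases hp : ((0 : Fin 2), c * q ^ 2 * jC ^ 2) = (l, b)
    · obtain ⟨hl, hb⟩ := Prod.mk.injEq .. ▸ hp
      subst hl
      exact ⟨rfl, Or.inl ⟨rfl, 2, by rw [← hb]; simp [eBB]⟩⟩
    · rw [if_neg hp] at h; exfalso; split_ifs at h <;> omega
  case b3' =>
    by_cases hp : ((1 : Fin 2), c ^ 3 * q ^ 9) = (l, b)
    · obtain ⟨hl, hb⟩ := Prod.mk.injEq .. ▸ hp
      subst hl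
      exact ⟨rfl, Or.inr ⟨rfl, by rw [← hb]; simp [eBB]⟩⟩
    · rw [if_neg hp] at h; exfalso; split_ifs at h <;> omega
  case b2' =>
    by_cases hp : ((0 : Fin 2), c * q ^ 4) = (l, b)
    · obtain ⟨hl, hb⟩ := Prod.mk.injEq .. ▸ hp
      subst hl
      exact ⟨rfl, Or.inl ⟨rfl, 0, by rw [← hb]; simp [eBB]⟩⟩
    · rw [if_neg hp] at h; exfalso; split_ifs at h <;> omega
  case b1' =>
    exfalso; split_ifs at h <;> omega

/-- Every coefficient of a box is at most `1`. -/
lemma box_apply_le_one (q : ℂˣ) (α : BB) (c : ℂˣ) (lb : Fin 2 × ℂˣ) :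
    (box q α c) lb ≤ 1 := by
  obtain ⟨l, b⟩ := lb
  cases α <;>
    simp only [box, Zv, Finsupp.add_apply, Finsupp.neg_apply, Finsupp.sub_apply,
      Finsupp.single_apply]
  case b3 =>
    by_cases hp : ((0 : Fin 2), c * q ^ 2 * jC) = (l, b) <;>
      by_cases hp2 : ((0 : Fin 2), c * q ^ 2 * jC ^ 2) = (l, b)
    · exfalso
      apply jC_ne_sq
      obtain ⟨-, hb2⟩ := Prod.mk.injEq .. ▸ hp
      obtain ⟨-, hb3⟩ := Prod.mk.injEq .. ▸ hp2
      exact mul_left_cancel (a := c * q ^ 2) (hb2.trans hb3.symm)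
    · rw [if_pos hp, if_neg hp2]; split_ifs <;> omega
    · rw [if_neg hp, if_pos hp2]; split_ifs <;> omega
    · rw [if_neg hp, if_neg hp2]; split_ifs <;> omega
  all_goals split_ifs <;> omega

lemma sum_le_one_of_pairwise {k : ℕ} (f : Fin k → ℤ) (h1 : ∀ p, f p ≤ 1)
    (h2 : ∀ p p' : Fin k, p < p' → 1 ≤ f p → 1 ≤ f p' → False) :
    ∑ p, f p ≤ 1 := by
  classical
  have hsplit := Finset.sum_filter_add_sum_filter_not Finset.univ (fun p => 1 ≤ f p) f
  set S := Finset.univ.filter (fun p => 1 ≤ f p) with hS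
  have hcard : S.card ≤ 1 := by
    rw [Finset.card_le_one]
    intro a ha b hb
    rw [hS, Finset.mem_filter] at ha hb
    rcases lt_trichotomy a b with hab | hab | hab
    · exact absurd (h2 a b hab ha.2 hb.2) not_false
    · exact hab
    · exact absurd (h2 b a hab hb.2 ha.2) not_false
  have hA : ∑ p ∈ S, f p ≤ 1 := by
    calc ∑ p ∈ S, f p ≤ S.card • (1 : ℤ) :=
          Finset.sum_le_card_nsmul S f 1 (fun p _ => h1 p)
      _ = (S.card : ℤ) := by simp
      _ ≤ 1 := by exact_mod_cast hcard
  have hB : ∑ p ∈ Finset.univ.filter (fun p => ¬ (1 ≤ f p)), f p ≤ 0 := by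
    apply Finset.sum_nonpos
    intro p hp
    rw [Finset.mem_filter] at hp
    omega
  omega

lemma rank_mono_aux {k : ℕ} {T : Fin k → BB} (hT : IsTab1 k T) :
    ∀ (d p : ℕ) (h : p + d < k),
      (T ⟨p, by omega⟩).rank ≤ (T ⟨p + d, h⟩).rank := by
  intro d
  induction d with
  | zero => intro p h; exact le_refl _
  | succ n ih =>
    intro p h
    have h1 : p + n < k := by omega
    have step := hT (p + n) (by omega)
    have hstep : (T ⟨p + n, h1⟩).rank ≤ (T ⟨p + n + 1, by omega⟩).rank := by
      rcases step with heq | hlt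
      · rw [heq]
      · exact le_of_lt hlt
    exact le_trans (ih p h1) hstep

lemma rank_mono {k : ℕ} {T : Fin k → BB} (hT : IsTab1 k T) {p p' : Fin k}
    (h : (p : ℕ) ≤ (p' : ℕ)) : (T p).rank ≤ (T p').rank := by
  have h2 := rank_mono_aux hT ((p' : ℕ) - (p : ℕ)) (p : ℕ) (by omega)
  have e1 : (⟨(p : ℕ), by omega⟩ : Fin k) = p := rfl
  have e2 : (⟨(p : ℕ) + ((p' : ℕ) - (p : ℕ)), by omega⟩ : Fin k) = p' := by
    apply Fin.ext; simp; omega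
  rw [e1, e2] at h2
  exact h2

/-- Each row of the tableau contributes at most `1` to each exponent. -/
lemma row_le_one (q : ℂˣ) (hq : ∀ n : ℕ, 0 < n → (q : ℂ) ^ n ≠ 1) {k : ℕ}
    (T : Fin k → BB) (hT : IsTab1 k T) (c : ℂˣ) (lb : Fin 2 × ℂˣ) :
    ∑ p : Fin k, (box q (T p) (c * q ^ (2 * (p : ℤ)))) lb ≤ 1 := by
  obtain ⟨l, b⟩ := lb
  apply sum_le_one_of_pairwise
  · intro p; exact box_apply_le_one q _ _ _
  · intro p p' hpp hp hp'
    have hnat : (p : ℕ) < (p' : ℕ) := hpp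
    obtain ⟨hl, hcase⟩ := hit_structure q (T p) _ l b hp
    obtain ⟨hl', hcase'⟩ := hit_structure q (T p') _ l b hp'
    have hrank : (T p).rank ≤ (T p').rank := rank_mono hT (le_of_lt hnat)
    have hee : eBB (T p) ≤ eBB (T p') := eBB_mono _ _ (hl.symm.trans hl') hrank
    have hpplt : (p : ℤ) < (p' : ℤ) := by exact_mod_cast hnat
    rcases hcase with ⟨hl0, m, hb⟩ | ⟨hl1, hb⟩
    · rcases hcase' with ⟨-, m', hb'⟩ | ⟨hl1', -⟩
      · have heq := conflict hq c (2 * (p : ℤ)) (2 * (p' : ℤ))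
          (eBB (T p)) (eBB (T p')) m m' (hb.symm.trans hb')
        omega
      · rw [hl0] at hl1'; exact absurd hl1' (by decide)
    · rcases hcase' with ⟨hl0', -⟩ | ⟨-, hb'⟩
      · rw [hl1] at hl0'; exact absurd hl0' (by decide)
      · have heq := conflict2 hq c (2 * (p : ℤ)) (2 * (p' : ℤ))
          (eBB (T p)) (eBB (T p')) (hb.symm.trans hb')
        omega

/-- Every monomial of the twisted q-character of the Kirillov–Reshetikhin module
`W^{(2)}_{k,a}` of type `D₄⁽³⁾` has affine degree at most `2`: all exponents of
`m^{(2)}_{T,a}` are at most `2`. -/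
theorem m2_affine_degree_le_two (q : ℂˣ) (hq : ∀ n : ℕ, 0 < n → (q : ℂ) ^ n ≠ 1)
    (k : ℕ) (hk : 1 ≤ k) (T : Fin 2 → Fin k → BB) (hT : IsTab2 k T) (a : ℂˣ) :
    ∀ lb : Fin 2 × ℂˣ, (m2 q T a) lb ≤ 2 := by
  intro lb
  rw [m2, Finsupp.finset_sum_apply]
  simp only [Finsupp.finset_sum_apply]
  rw [Fin.sum_univ_two]
  have hrow0 : ∑ p : Fin k, (box q (T 0 p) (a * q ^ (2 * ((p : ℤ) - ((0 : Fin 2) : ℤ))))) lb ≤ 1 := by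
    have hc : ∀ p : Fin k, a * q ^ (2 * ((p : ℤ) - ((0 : Fin 2) : ℤ))) = a * q ^ (2 * (p : ℤ)) := by
      intro p
      have he : (2 : ℤ) * ((p : ℤ) - (((0 : Fin 2) : ℕ) : ℤ)) = 2 * (p : ℤ) := by
        have h0 : (((0 : Fin 2) : ℕ) : ℤ) = 0 := by norm_num
        rw [h0]; ring
      rw [he]
    calc ∑ p : Fin k, (box q (T 0 p) (a * q ^ (2 * ((p : ℤ) - ((0 : Fin 2) : ℤ))))) lb
        = ∑ p : Fin k, (box q (T 0 p) (a * q ^ (2 * (p : ℤ)))) lb := by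
          apply Finset.sum_congr rfl; intro p _; rw [hc p]
      _ ≤ 1 := row_le_one q hq (T 0) (hT.1 0) a lb
  have hrow1 : ∑ p : Fin k, (box q (T 1 p) (a * q ^ (2 * ((p : ℤ) - ((1 : Fin 2) : ℤ))))) lb ≤ 1 := by
    have hc : ∀ p : Fin k, a * q ^ (2 * ((p : ℤ) - ((1 : Fin 2) : ℤ)))
        = (a * q ^ (-2 : ℤ)) * q ^ (2 * (p : ℤ)) := by
      intro p
      have he : (2 : ℤ) * ((p : ℤ) - (((1 : Fin 2) : ℕ) : ℤ)) = -2 + 2 * (p : ℤ) := by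
        have h1 : (((1 : Fin 2) : ℕ) : ℤ) = 1 := by norm_num
        rw [h1]; ring
      rw [he, zpow_add, ← mul_assoc]
    calc ∑ p : Fin k, (box q (T 1 p) (a * q ^ (2 * ((p : ℤ) - ((1 : Fin 2) : ℤ))))) lb
        = ∑ p : Fin k, (box q (T 1 p) ((a * q ^ (-2 : ℤ)) * q ^ (2 * (p : ℤ)))) lb := by
          apply Finset.sum_congr rfl; intro p _; rw [hc p]
      _ ≤ 1 := row_le_one q hq (T 1) (hT.1 1) (a * q ^ (-2 : ℤ)) lb
  omega
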